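/- For an odd prime p, n ≥ 1, u a unit of ℤ/pⁿℤ and 0 < k < n with n - k ≤ k: the Γ₀(ℤ/pⁿℤ)-orbit of the unimodular pair (1, u·p^k) has exactly φ(pⁿ) elements; if instead k < n - k, the orbit has φ(pⁿ)·p^{n-2k} elements. -/

import Mathlib

open Matrix

/-- The Borel subgroup `Γ₀(R)` of upper triangular matrices in `SL₂(R)`. -/
def Gamma0 (R : Type*) [CommRing R] : Subgroup (Matrix.SpecialLinearGroup (Fin 2) R) where
  carrier := {A | A.1 1 0 = 0}
  one_mem' := by simp [Matrix.one_apply]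
  mul_mem' := by
    intro a b ha hb
    simp only [Set.mem_setOf_eq] at *
    have : ((a * b : Matrix.SpecialLinearGroup (Fin 2) _)).1 1 0
        = a.1 1 0 * b.1 0 0 + a.1 1 1 * b.1 1 0 := by
      simp [Matrix.mul_apply, Fin.sum_univ_two]
    rw [this, ha, hb]; ring
  inv_mem' := by
    intro a ha
    simp only [Set.mem_setOf_eq] at *
    rw [Matrix.SpecialLinearGroup.SL2_inv_expl]
    simp [ha]

/-- A pair is unimodular (over a local ring) if one of its entries is a unit. -/
def IsUnimodular {R : Type*} [CommRing R] (v : Fin 2 → R) : Prop :=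
  IsUnit (v 0) ∨ IsUnit (v 1)

def P1Setoid (R : Type*) [CommRing R] : Setoid {v : Fin 2 → R // IsUnimodular v} where
  r x y := ∃ u : Rˣ, u • x.1 = y.1
  iseqv := by
    refine ⟨fun x => ⟨1, one_smul _ _⟩, ?_, ?_⟩
    · rintro x y ⟨u, h⟩
      exact ⟨u⁻¹, by rw [← h, inv_smul_smul]⟩
    · rintro x y z ⟨u, h⟩ ⟨w, h2⟩
      exact ⟨w * u, by rw [← h2, ← h]; exact (smul_smul w u x.1).symm ▸ rfl⟩

/-- The projective line over `R`: unimodular pairs up to unit scaling. -/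
def P1 (R : Type*) [CommRing R] := Quotient (P1Setoid R)

def P1.mk {R : Type*} [CommRing R] (v : Fin 2 → R) (h : IsUnimodular v) : P1 R :=
  Quotient.mk (P1Setoid R) ⟨v, h⟩

theorem isUnimodular_mulVec {R : Type*} [CommRing R] [IsLocalRing R]
    (g : Matrix.SpecialLinearGroup (Fin 2) R) {v : Fin 2 → R} (hv : IsUnimodular v) :
    IsUnimodular (g.1.mulVec v) := by
  by_contra h
  rw [IsUnimodular, not_or] at h
  obtain ⟨h0, h1⟩ := h
  have hv' : v = (g⁻¹).1.mulVec (g.1.mulVec v) := by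
    rw [Matrix.mulVec_mulVec, ← Matrix.SpecialLinearGroup.coe_mul, inv_mul_cancel]
    simp
  have key : ∀ i, ¬ IsUnit (v i) := by
    intro i
    rw [hv']
    have hexp : (g⁻¹).1.mulVec (g.1.mulVec v) i
        = (g⁻¹).1 i 0 * (g.1.mulVec v 0) + (g⁻¹).1 i 1 * (g.1.mulVec v 1) := by
      simp [Matrix.mulVec, dotProduct, Fin.sum_univ_two]
    rw [hexp]
    intro hu
    have m0 : (g⁻¹).1 i 0 * (g.1.mulVec v 0) ∈ nonunits R := by
      intro hc
      exact h0 (isUnit_of_mul_isUnit_right hc)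
    have m1 : (g⁻¹).1 i 1 * (g.1.mulVec v 1) ∈ nonunits R := by
      intro hc
      exact h1 (isUnit_of_mul_isUnit_right hc)
    exact (IsLocalRing.nonunits_add m0 m1) hu
  rcases hv with h | h
  · exact key 0 h
  · exact key 1 h

noncomputable instance P1.smul {R : Type*} [CommRing R] [IsLocalRing R] :
    SMul (Matrix.SpecialLinearGroup (Fin 2) R) (P1 R) where
  smul g := Quotient.map
    (fun v => ⟨g.1.mulVec v.1, isUnimodular_mulVec g v.2⟩)
    (by
      rintro x y ⟨u, h⟩
      refine ⟨u, ?_⟩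
      simp only [← h]
      rw [Units.smul_def, Units.smul_def, Matrix.mulVec_smul])

theorem P1.smul_mk {R : Type*} [CommRing R] [IsLocalRing R]
    (g : Matrix.SpecialLinearGroup (Fin 2) R) (v : Fin 2 → R) (h : IsUnimodular v) :
    g • (P1.mk v h) = P1.mk (g.1.mulVec v) (isUnimodular_mulVec g h) := rfl

noncomputable instance P1.mulAction {R : Type*} [CommRing R] [IsLocalRing R] :
    MulAction (Matrix.SpecialLinearGroup (Fin 2) R) (P1 R) where
  one_smul := by
    intro x
    induction x using Quotient.ind with
    | _ v =>
      show Quotient.map _ _ _ = _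
      rw [Quotient.map_mk]
      congr 1
      exact Subtype.ext (by simp)
  mul_smul := by
    intro g h x
    induction x using Quotient.ind with
    | _ v =>
      show Quotient.map _ _ _ = Quotient.map _ _ (Quotient.map _ _ _)
      rw [Quotient.map_mk, Quotient.map_mk, Quotient.map_mk]
      congr 1
      exact Subtype.ext (by simp [Matrix.mul_apply, Fin.sum_univ_two]; constructor <;> ring)

theorem zmod_pow_isUnit_iff (p : ℕ) [hp : Fact p.Prime] (n : ℕ) [NeZero n]
    (x : ZMod (p^n)) : IsUnit x ↔ ¬ (p ∣ x.val) := by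
  haveI : NeZero (p^n) := ⟨pow_ne_zero n hp.out.ne_zero⟩
  conv_lhs => rw [← ZMod.natCast_rightInverse x]
  rw [ZMod.isUnit_iff_coprime]
  rw [Nat.coprime_pow_right_iff (Nat.pos_of_ne_zero (NeZero.ne n))]
  rw [Nat.coprime_comm]
  exact hp.out.coprime_iff_not_dvd

instance zmod_pow_isLocalRing (p : ℕ) [hp : Fact p.Prime] (n : ℕ) [NeZero n] :
    IsLocalRing (ZMod (p^n)) := by
  haveI : NeZero (p^n) := ⟨pow_ne_zero n hp.out.ne_zero⟩
  haveI : Fact (1 < p^n) :=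
    ⟨Nat.one_lt_pow (NeZero.ne n) hp.out.one_lt⟩
  refine IsLocalRing.of_nonunits_add ?_
  intro a b ha hb
  rw [mem_nonunits_iff, zmod_pow_isUnit_iff, not_not] at ha hb ⊢
  rw [ZMod.val_add]
  rw [Nat.dvd_mod_iff (dvd_pow_self p (NeZero.ne n))]
  exact Nat.dvd_add ha hb

theorem isUnimodular_pair_left {R : Type*} [CommRing R] {a b : R} (h : IsUnit a) :
    IsUnimodular ![a, b] := Or.inl (by simpa using h)

theorem isUnimodular_pair_right {R : Type*} [CommRing R] {a b : R} (h : IsUnit b) :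
    IsUnimodular ![a, b] := Or.inr (by simpa using h)

/-- The set of unimodular pairs in `R²`. -/
abbrev F1 (R : Type*) [CommRing R] := {v : Fin 2 → R // IsUnimodular v}

noncomputable instance F1.smul {R : Type*} [CommRing R] [IsLocalRing R] :
    SMul (Matrix.SpecialLinearGroup (Fin 2) R) (F1 R) :=
  ⟨fun g v => ⟨g.1.mulVec v.1, isUnimodular_mulVec g v.2⟩⟩

noncomputable instance F1.mulAction {R : Type*} [CommRing R] [IsLocalRing R] :
    MulAction (Matrix.SpecialLinearGroup (Fin 2) R) (F1 R) where
  one_smul v := Subtype.ext (by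
    show (1 : Matrix.SpecialLinearGroup (Fin 2) R).1.mulVec v.1 = v.1
    simp)
  mul_smul g h v := Subtype.ext (by
    show ((g * h : Matrix.SpecialLinearGroup (Fin 2) R)).1.mulVec v.1
      = g.1.mulVec (h.1.mulVec v.1)
    simp [Matrix.mul_apply, Fin.sum_univ_two]; constructor <;> ring)

/-- The unipotent subgroup `Γ₁(R)` of matrices `(1 b; 0 1)` in `SL₂(R)`. -/
def Gamma1 (R : Type*) [CommRing R] : Subgroup (Matrix.SpecialLinearGroup (Fin 2) R) where
  carrier := {A | A.1 0 0 = 1 ∧ A.1 1 1 = 1 ∧ A.1 1 0 = 0}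
  one_mem' := by simp [Matrix.one_apply]
  mul_mem' := by
    intro a b ha hb
    simp only [Set.mem_setOf_eq] at *
    obtain ⟨ha1, ha2, ha3⟩ := ha
    obtain ⟨hb1, hb2, hb3⟩ := hb
    have e : ∀ i j : Fin 2, ((a * b : Matrix.SpecialLinearGroup (Fin 2) _)).1 i j
        = a.1 i 0 * b.1 0 j + a.1 i 1 * b.1 1 j := by
      intro i j
      simp [Matrix.mul_apply, Fin.sum_univ_two]
    refine ⟨?_, ?_, ?_⟩ <;> rw [e] <;>
      simp [ha1, ha2, ha3, hb1, hb2, hb3]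
  inv_mem' := by
    intro a ha
    simp only [Set.mem_setOf_eq] at *
    obtain ⟨ha1, ha2, ha3⟩ := ha
    rw [Matrix.SpecialLinearGroup.SL2_inv_expl]
    simp [ha1, ha2, ha3]

/-- For an odd prime `p`, `n ≥ 1`, a unit `u` and `0 < k < n`: the `Γ₀(ℤ/pⁿℤ)`-orbit of
the unimodular pair `(1, u·p^k)` has exactly `φ(pⁿ)` elements if `n - k ≤ k`, and
`φ(pⁿ)·p^(n-2k)` elements if `k < n - k`. -/
theorem card_borel_orbit_F1_pair (p : ℕ) [Fact p.Prime] (hp2 : p ≠ 2) (n : ℕ) [NeZero n]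
    (u : ZMod (p ^ n)) (hu : IsUnit u) (k : ℕ) (hk0 : 0 < k) (hkn : k < n) :
    (n - k ≤ k →
      Nat.card (MulAction.orbit (Gamma0 (ZMod (p ^ n)))
          (⟨![(1 : ZMod (p ^ n)), u * (p : ZMod (p ^ n)) ^ k],
            isUnimodular_pair_left isUnit_one⟩ : F1 (ZMod (p ^ n))))
        = Nat.totient (p ^ n)) ∧
    (k < n - k →
      Nat.card (MulAction.orbit (Gamma0 (ZMod (p ^ n)))
          (⟨![(1 : ZMod (p ^ n)), u * (p : ZMod (p ^ n)) ^ k],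
            isUnimodular_pair_left isUnit_one⟩ : F1 (ZMod (p ^ n))))
        = Nat.totient (p ^ n) * p ^ (n - 2 * k)) := by
  haveI : NeZero (p ^ n) := ⟨pow_ne_zero n (Fact.out : p.Prime).ne_zero⟩
  set v : F1 (ZMod (p ^ n)) := ⟨![(1 : ZMod (p ^ n)), u * (p : ZMod (p ^ n)) ^ k],
    isUnimodular_pair_left isUnit_one⟩ with hv
  have hpn0 : (p : ZMod (p ^ n)) ^ n = 0 := by
    rw [← Nat.cast_pow, ZMod.natCast_self]
  have hp_nonunit : ¬ IsUnit (p : ZMod (p ^ n)) := by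
    rw [zmod_pow_isUnit_iff, not_not, ZMod.val_natCast]
    exact (Nat.dvd_mod_iff (dvd_pow_self p (NeZero.ne n))).mpr dvd_rfl
  obtain ⟨k', hk'⟩ : ∃ k', k = k' + 1 := ⟨k - 1, by omega⟩
  have hunit_add : ∀ a c : ZMod (p ^ n), IsUnit a →
      IsUnit (a + (p : ZMod (p ^ n)) ^ k * c) := by
    intro a c ha
    by_contra h
    have hm : ¬ IsUnit (-((p : ZMod (p ^ n)) ^ k * c)) := by
      rw [IsUnit.neg_iff]
      intro hc
      apply hp_nonunit
      apply isUnit_of_mul_isUnit_left (y := (p : ZMod (p ^ n)) ^ k' * c)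
      rwa [← mul_assoc, ← pow_succ', ← hk']
    have hsum : a ∈ nonunits (ZMod (p ^ n)) := by
      have h2 := IsLocalRing.nonunits_add (a := a + (p : ZMod (p ^ n)) ^ k * c)
        (b := -((p : ZMod (p ^ n)) ^ k * c)) h hm
      simpa using h2
    exact hsum ha
  have hbig : (p : ZMod (p ^ n)) ^ (n - 2 * k) * (p : ZMod (p ^ n)) ^ (2 * k) = 0 := by
    obtain ⟨m, hm⟩ : ∃ m, n - 2 * k + 2 * k = n + m := ⟨n - 2 * k + 2 * k - n, by omega⟩
    rw [← pow_add, hm, pow_add, hpn0, zero_mul]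
  have hreduce : ∀ c : ZMod (p ^ n), ∃ t : Fin (p ^ (n - 2 * k)),
      ((t : ℕ) : ZMod (p ^ n)) * (p : ZMod (p ^ n)) ^ (2 * k)
        = c * (p : ZMod (p ^ n)) ^ (2 * k) := by
    intro c
    have hpos : 0 < p ^ (n - 2 * k) := pow_pos (Fact.out : p.Prime).pos _
    refine ⟨⟨c.val % p ^ (n - 2 * k), Nat.mod_lt _ hpos⟩, ?_⟩
    conv_rhs => rw [← ZMod.natCast_rightInverse c,
      ← Nat.div_add_mod c.val (p ^ (n - 2 * k))]
    push_cast
    linear_combination (-((c.val / p ^ (n - 2 * k) : ℕ) : ZMod (p ^ n))) * hbig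
  have hcancel : ∀ s t : ℕ, s < p ^ (n - 2 * k) → t < p ^ (n - 2 * k) →
      ((s : ZMod (p ^ n)) * (p : ZMod (p ^ n)) ^ (2 * k)
        = (t : ZMod (p ^ n)) * (p : ZMod (p ^ n)) ^ (2 * k)) → s = t := by
    intro s t hs ht h
    rcases le_or_gt n (2 * k) with hle | hlt
    · have h0 : n - 2 * k = 0 := by omega
      rw [h0, pow_zero] at hs ht
      omega
    · have h2 : ((s * p ^ (2 * k) : ℕ) : ZMod (p ^ n)) = ((t * p ^ (2 * k) : ℕ) : ZMod (p ^ n)) := by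
        push_cast
        exact h
      rw [ZMod.natCast_eq_natCast_iff] at h2
      have h3 : p ^ n = p ^ (n - 2 * k) * p ^ (2 * k) := by
        rw [← pow_add]
        congr 1
        omega
      rw [h3] at h2
      have h4 : s ≡ t [MOD p ^ (n - 2 * k)] :=
        Nat.ModEq.mul_right_cancel' (pow_ne_zero _ (Fact.out : p.Prime).ne_zero) h2
      rwa [Nat.ModEq, Nat.mod_eq_of_lt hs, Nat.mod_eq_of_lt ht] at h4
  have hmulvec : ∀ (A : Matrix (Fin 2) (Fin 2) (ZMod (p ^ n))) (w : Fin 2 → ZMod (p ^ n)),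
      A.mulVec w = ![A 0 0 * w 0 + A 0 1 * w 1, A 1 0 * w 0 + A 1 1 * w 1] := by
    intro A w
    funext i
    fin_cases i <;> simp [Matrix.mulVec, dotProduct, Fin.sum_univ_two]
  set f : (ZMod (p ^ n))ˣ × Fin (p ^ (n - 2 * k)) → F1 (ZMod (p ^ n)) := fun z =>
    ⟨![(z.1 : ZMod (p ^ n)),
        u * ((z.1⁻¹ : (ZMod (p ^ n))ˣ) : ZMod (p ^ n)) * (p : ZMod (p ^ n)) ^ k
          + ((z.2 : ℕ) : ZMod (p ^ n)) * (p : ZMod (p ^ n)) ^ (2 * k)],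
      isUnimodular_pair_left z.1.isUnit⟩ with hf
  have hf_inj : Function.Injective f := by
    rintro ⟨x, s⟩ ⟨y, t⟩ h
    have h0 := congrFun (congrArg Subtype.val h) 0
    have h1 := congrFun (congrArg Subtype.val h) 1
    simp only [hf, Matrix.cons_val_zero, Matrix.cons_val_one, Matrix.head_cons] at h0 h1
    have hxy : x = y := Units.ext h0
    subst hxy
    have h2 := add_left_cancel h1
    have h3 := hcancel s t s.isLt t.isLt h2
    exact Prod.ext rfl (Fin.ext h3)
  have horb : (MulAction.orbit (Gamma0 (ZMod (p ^ n))) v : Set (F1 (ZMod (p ^ n))))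
      = Set.range f := by
    ext w
    constructor
    · rintro ⟨⟨g, hg⟩, rfl⟩
      have hg0 : g.1 1 0 = 0 := hg
      have had : g.1 0 0 * g.1 1 1 = 1 := by
        have hdet := g.2
        rw [Matrix.det_fin_two, hg0, mul_zero, sub_zero] at hdet
        exact hdet
      have hxu : IsUnit (g.1 0 0 + (p : ZMod (p ^ n)) ^ k * (g.1 0 1 * u)) :=
        hunit_add _ _ ⟨⟨_, _, had, by rw [mul_comm]; exact had⟩, rfl⟩
      set x : (ZMod (p ^ n))ˣ := hxu.unit with hxdef
      have hxval : (x : ZMod (p ^ n)) = g.1 0 0 + (p : ZMod (p ^ n)) ^ k * (g.1 0 1 * u) :=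
        hxu.unit_spec
      have hxinv : ((x⁻¹ : (ZMod (p ^ n))ˣ) : ZMod (p ^ n)) * (x : ZMod (p ^ n)) = 1 :=
        x.inv_mul
      rw [hxval] at hxinv
      obtain ⟨t, ht⟩ := hreduce
        (u ^ 2 * g.1 0 1 * g.1 1 1 * ((x⁻¹ : (ZMod (p ^ n))ˣ) : ZMod (p ^ n)))
      refine ⟨(x, t), ?_⟩
      apply Subtype.ext
      show ![_, _] = g.1.mulVec v.1
      rw [hmulvec]
      have hv0 : v.1 0 = 1 := rfl
      have hv1 : v.1 1 = u * (p : ZMod (p ^ n)) ^ k := rfl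
      rw [hv0, hv1]
      funext i
      fin_cases i
      · show (x : ZMod (p ^ n)) = g.1 0 0 * 1 + g.1 0 1 * (u * (p : ZMod (p ^ n)) ^ k)
        rw [hxval]
        ring
      · show u * ((x⁻¹ : (ZMod (p ^ n))ˣ) : ZMod (p ^ n)) * (p : ZMod (p ^ n)) ^ k
            + ((t : ℕ) : ZMod (p ^ n)) * (p : ZMod (p ^ n)) ^ (2 * k)
          = g.1 1 0 * 1 + g.1 1 1 * (u * (p : ZMod (p ^ n)) ^ k)
        rw [hg0]
        linear_combination ht + (g.1 1 1 * u * (p : ZMod (p ^ n)) ^ k) * hxinv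
          - (u * ((x⁻¹ : (ZMod (p ^ n))ˣ) : ZMod (p ^ n)) * (p : ZMod (p ^ n)) ^ k) * had
    · rintro ⟨⟨x, t⟩, rfl⟩
      have hxinv : ((x⁻¹ : (ZMod (p ^ n))ˣ) : ZMod (p ^ n)) * (x : ZMod (p ^ n)) = 1 :=
        x.inv_mul
      have hui : ((hu.unit⁻¹ : (ZMod (p ^ n))ˣ) : ZMod (p ^ n)) * u = 1 := hu.val_inv_mul
      have hDu : IsUnit (((x⁻¹ : (ZMod (p ^ n))ˣ) : ZMod (p ^ n))
          + (p : ZMod (p ^ n)) ^ k * (((hu.unit⁻¹ : (ZMod (p ^ n))ˣ) : ZMod (p ^ n))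
            * ((t : ℕ) : ZMod (p ^ n)))) :=
        hunit_add _ _ (x⁻¹).isUnit
      set D : (ZMod (p ^ n))ˣ := hDu.unit with hDdef
      have hD : (D : ZMod (p ^ n)) = ((x⁻¹ : (ZMod (p ^ n))ˣ) : ZMod (p ^ n))
          + (p : ZMod (p ^ n)) ^ k * (((hu.unit⁻¹ : (ZMod (p ^ n))ˣ) : ZMod (p ^ n))
            * ((t : ℕ) : ZMod (p ^ n))) := hDu.unit_spec
      have hDinv : ((D⁻¹ : (ZMod (p ^ n))ˣ) : ZMod (p ^ n)) * (D : ZMod (p ^ n)) = 1 :=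
        D.inv_mul
      refine ⟨⟨⟨!![((D⁻¹ : (ZMod (p ^ n))ˣ) : ZMod (p ^ n)),
          ((D⁻¹ : (ZMod (p ^ n))ˣ) : ZMod (p ^ n)) * (x : ZMod (p ^ n))
            * ((hu.unit⁻¹ : (ZMod (p ^ n))ˣ) : ZMod (p ^ n)) ^ 2 * ((t : ℕ) : ZMod (p ^ n));
          0, (D : ZMod (p ^ n))], by
        rw [Matrix.det_fin_two_of]
        linear_combination hDinv⟩, by
        show (!![_, _; 0, _] : Matrix (Fin 2) (Fin 2) (ZMod (p ^ n))) 1 0 = 0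
        simp⟩, ?_⟩
      apply Subtype.ext
      show (!![_, _; 0, _] : Matrix (Fin 2) (Fin 2) (ZMod (p ^ n))).mulVec v.1 = ![_, _]
      rw [hmulvec]
      have hv0 : v.1 0 = 1 := rfl
      have hv1 : v.1 1 = u * (p : ZMod (p ^ n)) ^ k := rfl
      rw [hv0, hv1]
      funext i
      fin_cases i
      · show (!![_, _; 0, _] : Matrix (Fin 2) (Fin 2) (ZMod (p ^ n))) 0 0 * 1
            + (!![_, _; 0, _] : Matrix (Fin 2) (Fin 2) (ZMod (p ^ n))) 0 1
              * (u * (p : ZMod (p ^ n)) ^ k)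
          = (x : ZMod (p ^ n))
        simp only [Matrix.cons_val', Matrix.cons_val_zero, Matrix.cons_val_one,
          Matrix.head_cons, Matrix.empty_val', Matrix.cons_val_fin_one, Matrix.head_fin_const,
          Matrix.of_apply]
        linear_combination ((x : ZMod (p ^ n)) * ((D⁻¹ : (ZMod (p ^ n))ˣ) : ZMod (p ^ n))
              * ((hu.unit⁻¹ : (ZMod (p ^ n))ˣ) : ZMod (p ^ n)) * ((t : ℕ) : ZMod (p ^ n))
              * (p : ZMod (p ^ n)) ^ k) * hui
          - (((D⁻¹ : (ZMod (p ^ n))ˣ) : ZMod (p ^ n)) * (x : ZMod (p ^ n))) * hD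
          + (x : ZMod (p ^ n)) * hDinv
          - ((D⁻¹ : (ZMod (p ^ n))ˣ) : ZMod (p ^ n)) * hxinv
      · show (!![_, _; 0, _] : Matrix (Fin 2) (Fin 2) (ZMod (p ^ n))) 1 0 * 1
            + (!![_, _; 0, _] : Matrix (Fin 2) (Fin 2) (ZMod (p ^ n))) 1 1
              * (u * (p : ZMod (p ^ n)) ^ k)
          = u * ((x⁻¹ : (ZMod (p ^ n))ˣ) : ZMod (p ^ n)) * (p : ZMod (p ^ n)) ^ k
            + ((t : ℕ) : ZMod (p ^ n)) * (p : ZMod (p ^ n)) ^ (2 * k)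
        simp only [Matrix.cons_val', Matrix.cons_val_zero, Matrix.cons_val_one,
          Matrix.head_cons, Matrix.empty_val', Matrix.cons_val_fin_one, Matrix.head_fin_const,
          Matrix.of_apply]
        linear_combination (u * (p : ZMod (p ^ n)) ^ k) * hD
          + ((p : ZMod (p ^ n)) ^ (2 * k) * ((t : ℕ) : ZMod (p ^ n))) * hui
  have hcard : Nat.card (MulAction.orbit (Gamma0 (ZMod (p ^ n))) v)
      = Nat.totient (p ^ n) * p ^ (n - 2 * k) := by
    rw [horb, Nat.card_range_of_injective hf_inj, Nat.card_prod,
      Nat.card_eq_fintype_card, Nat.card_eq_fintype_card, ZMod.card_units_eq_totient,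
      Fintype.card_fin]
  refine ⟨fun h => ?_, fun h => hcard⟩
  rw [hcard]
  have h0 : n - 2 * k = 0 := by omega
  rw [h0, pow_zero, mul_one]
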